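/- Let (Ξ_l)_{l≥0} be a sequence of independent real-valued random variables with E[Ξ_l] = π^l(φ) − π^{l−1}(φ) for l ≥ 1 and E[Ξ_0] = π^0(φ), where π^l(φ) → π(φ) as l → ∞ and sup_l E[Ξ_l²] < ∞ level-wise. Let P_L be a probability mass function on ℕ with P_L(l) > 0 for all l. If Σ_{l≥0} E[Ξ_l²]/P_L(l) < ∞, then the single-term estimator Ξ_L/P_L(L), where L ~ P_L is independent of (Ξ_l), is an unbiased estimator of π(φ) with finite variance. -/

import Mathlib

open MeasureTheory ProbabilityTheory Filter
open scoped ENNReal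

/-- Rhee–Glynn single-term debiasing: if `Ξ l` are independent with telescoping means
`E[Ξ 0] = π 0`, `E[Ξ l] = π l - π (l-1)`, `π l → πφ`, `L ~ P` is independent of the
sequence, and `∑ E[Ξ l ^ 2] / P l < ∞`, then `Ξ_L / P(L)` is an unbiased estimator of
`πφ` with finite variance (i.e. finite second moment). -/
theorem stmt_0
    {Ω : Type*} [MeasurableSpace Ω] (μ : Measure Ω) [IsProbabilityMeasure μ]
    (Ξ : ℕ → Ω → ℝ) (hmeas : ∀ l, Measurable (Ξ l))
    (hindep : iIndepFun Ξ μ)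
    (πl : ℕ → ℝ) (πφ : ℝ)
    (hE0 : ∫ ω, Ξ 0 ω ∂μ = πl 0)
    (hEl : ∀ l : ℕ, 1 ≤ l → ∫ ω, Ξ l ω ∂μ = πl l - πl (l - 1))
    (hlim : Tendsto πl atTop (nhds πφ))
    (hL2 : ∀ l, MemLp (Ξ l) 2 μ)
    (P : ℕ → ℝ) (hPpos : ∀ l, 0 < P l) (hPsum : ∑' l, P l = 1)
    (L : Ω → ℕ) (hLmeas : Measurable L)
    (hLlaw : ∀ l, μ {ω | L ω = l} = ENNReal.ofReal (P l))
    (hLindep : IndepFun L (fun ω => fun l => Ξ l ω) μ)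
    (hfin : Summable (fun l => (∫ ω, (Ξ l ω) ^ 2 ∂μ) / P l)) :
    (∫ ω, Ξ (L ω) ω / P (L ω) ∂μ = πφ) ∧
      Integrable (fun ω => (Ξ (L ω) ω / P (L ω)) ^ 2) μ := by
  classical
  -- notation
  set f : Ω → ℝ := fun ω => Ξ (L ω) ω / P (L ω) with hf
  set s : ℕ → Set Ω := fun l => L ⁻¹' {l} with hs
  have hsm : ∀ l, MeasurableSet (s l) := fun l => hLmeas (measurableSet_singleton l)
  have hsd : Pairwise (Function.onFun Disjoint s) := fun i j hij =>
    Set.disjoint_left.2 fun ω hi hj => hij (hi.symm.trans hj)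
  have hsU : (⋃ l, s l) = Set.univ := by
    ext ω; simp [hs]
  have hPne : ∀ l, P l ≠ 0 := fun l => (hPpos l).ne'
  -- measurability of f
  have hFm : Measurable fun ω => Ξ (L ω) ω := by
    have h1 : Measurable fun p : Ω × ℕ => Ξ p.2 p.1 :=
      measurable_from_prod_countable_left fun l => hmeas l
    exact h1.comp (measurable_id.prodMk hLmeas)
  have hfm : Measurable f := hFm.div ((measurable_of_countable P).comp hLmeas)
  -- E[Ξ l]
  set E : ℕ → ℝ := fun l => ∫ ω, Ξ l ω ∂μ with hE
  set V : ℕ → ℝ := fun l => ∫ ω, (Ξ l ω) ^ 2 ∂μ with hV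
  have hVnn : ∀ l, 0 ≤ V l := fun l => integral_nonneg fun ω => sq_nonneg _
  -- μ (s l) = P l
  have hμs : ∀ l, μ (s l) = ENNReal.ofReal (P l) := fun l => hLlaw l
  -- Summable P
  have hPsummable : Summable P := by
    by_contra h
    rw [tsum_eq_zero_of_not_summable h] at hPsum
    norm_num at hPsum
  -- |E l| bound and summability
  have hEsq : ∀ l, (E l) ^ 2 ≤ V l := by
    intro l
    have h1 := variance_nonneg (Ξ l) μ
    rw [variance_eq_sub (hL2 l)] at h1
    simp only [Pi.pow_apply] at h1
    simp only [hE, hV]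
    linarith
  have hEabs : ∀ l, |E l| ≤ (V l / P l + P l) / 2 := by
    intro l
    have hb : 0 ≤ (V l / P l + P l) / 2 := by
      have := hVnn l; have := (hPpos l).le
      positivity
    have h2 : (E l) ^ 2 ≤ ((V l / P l + P l) / 2) ^ 2 := by
      have hvp : V l = (V l / P l) * P l := (div_mul_cancel₀ _ (hPne l)).symm
      have h3 : (E l) ^ 2 ≤ (V l / P l) * P l := hvp ▸ hEsq l
      nlinarith [h3, sq_nonneg (V l / P l - P l)]
    calc |E l| = Real.sqrt ((E l) ^ 2) := (Real.sqrt_sq_eq_abs _).symm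
      _ ≤ Real.sqrt (((V l / P l + P l) / 2) ^ 2) := Real.sqrt_le_sqrt h2
      _ = (V l / P l + P l) / 2 := Real.sqrt_sq hb
  have hEsummable : Summable E := by
    refine Summable.of_abs (Summable.of_nonneg_of_le (fun l => abs_nonneg _) hEabs ?_)
    exact ((hfin.add hPsummable).div_const 2)
  -- telescoping partial sums
  have hpartial : ∀ n, ∑ l ∈ Finset.range (n + 1), E l = πl n := by
    intro n
    induction n with
    | zero => simpa [hE] using hE0
    | succ n ih =>
      rw [Finset.sum_range_succ, ih]
      have := hEl (n + 1) (by omega)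
      simp only [hE]
      rw [this]
      simp
  have htsumE : ∑' l, E l = πφ := by
    have h1 : Tendsto (fun n => ∑ l ∈ Finset.range n, E l) atTop (nhds (∑' l, E l)) :=
      hEsummable.hasSum.tendsto_sum_nat
    have h2 : Tendsto (fun n => ∑ l ∈ Finset.range (n + 1), E l) atTop (nhds (∑' l, E l)) :=
      h1.comp (tendsto_add_atTop_nat 1)
    have h3 : Tendsto (fun n => ∑ l ∈ Finset.range (n + 1), E l) atTop (nhds πφ) := by
      simpa only [hpartial] using hlim
    exact tendsto_nhds_unique h2 h3
  -- independence of indicator-type composites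
  have hcomp : ∀ (l : ℕ) (φ : ℕ → ℝ) (ψ : ℝ → ℝ), Measurable ψ →
      IndepFun (fun ω => φ (L ω)) (fun ω => ψ (Ξ l ω)) μ := by
    intro l φ ψ hψ
    exact hLindep.comp (measurable_of_countable φ) (hψ.comp (measurable_pi_apply l))
  -- ∫ over s l of Ξ l = P l * E l
  have hsetE : ∀ l, ∫ ω in s l, Ξ l ω ∂μ = P l * E l := by
    intro l
    have hind : IndepFun (fun ω => if L ω = l then (1:ℝ) else 0) (Ξ l) μ :=
      hcomp l (fun n => if n = l then (1:ℝ) else 0) id measurable_id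
    have hGm' : Measurable (fun ω => if L ω = l then (1:ℝ) else 0) :=
      Measurable.ite (hsm l) measurable_const measurable_const
    have h1 : (∫ ω in s l, Ξ l ω ∂μ) = ∫ ω, ((fun ω => if L ω = l then (1:ℝ) else 0) * Ξ l) ω ∂μ := by
      rw [← integral_indicator (hsm l)]
      congr 1
      funext ω
      by_cases h : L ω = l <;> simp [Set.indicator_apply, hs, h]
    rw [h1, hind.integral_mul_eq_mul_integral hGm'.aestronglyMeasurable (hmeas l).aestronglyMeasurable]
    congr 1
    have : (fun ω => if L ω = l then (1:ℝ) else 0) = (s l).indicator (fun _ => (1:ℝ)) := by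
      funext ω; by_cases h : L ω = l <;> simp [Set.indicator_apply, hs, h]
    rw [this, integral_indicator_const _ (hsm l)]
    simp [measureReal_def, hμs l, ENNReal.toReal_ofReal (hPpos l).le]
  -- second moment: lintegral computation
  have hglm : Measurable fun ω => ENNReal.ofReal ((f ω) ^ 2) :=
    (hfm.pow_const 2).ennreal_ofReal
  have hkey : ∫⁻ ω, ENNReal.ofReal ((f ω) ^ 2) ∂μ = ENNReal.ofReal (∑' l, V l / P l) := by
    have h0 : ∫⁻ ω, ENNReal.ofReal ((f ω) ^ 2) ∂μ
        = ∑' l, ∫⁻ ω in s l, ENNReal.ofReal ((f ω) ^ 2) ∂μ := by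
      rw [← lintegral_iUnion hsm hsd, hsU, Measure.restrict_univ]
    have h1 : ∀ l, ∫⁻ ω in s l, ENNReal.ofReal ((f ω) ^ 2) ∂μ
        = ENNReal.ofReal (V l / P l) := by
      intro l
      have hcongr : ∫⁻ ω in s l, ENNReal.ofReal ((f ω) ^ 2) ∂μ
          = ∫⁻ ω in s l, ENNReal.ofReal ((Ξ l ω / P l) ^ 2) ∂μ := by
        refine setLIntegral_congr_fun (hsm l) ?_
        intro ω hω
        have : L ω = l := hω
        simp [hf, this]
      rw [hcongr]
      -- indicator * function, independence
      have hHm : Measurable fun ω => ENNReal.ofReal ((Ξ l ω / P l) ^ 2) :=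
        (((hmeas l).div_const _).pow_const 2).ennreal_ofReal
      have hGm : Measurable fun ω => (if L ω = l then (1:ℝ≥0∞) else 0) :=
        Measurable.ite (hsm l) measurable_const measurable_const
      have hind : IndepFun (fun ω => (if L ω = l then (1:ℝ≥0∞) else 0))
          (fun ω => ENNReal.ofReal ((Ξ l ω / P l) ^ 2)) μ := by
        have := hLindep.comp (measurable_of_countable (fun n => if n = l then (1:ℝ≥0∞) else 0))
          (((((measurable_pi_apply (X := fun _ : ℕ => ℝ) l).div_const (P l)).pow_const 2).ennreal_ofReal) :
            Measurable fun g : ℕ → ℝ => ENNReal.ofReal ((g l / P l) ^ 2))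
        simpa [Function.comp_def] using this
      have h2 : ∫⁻ ω in s l, ENNReal.ofReal ((Ξ l ω / P l) ^ 2) ∂μ
          = ∫⁻ ω, ((fun ω => (if L ω = l then (1:ℝ≥0∞) else 0)) *
              (fun ω => ENNReal.ofReal ((Ξ l ω / P l) ^ 2))) ω ∂μ := by
        rw [← lintegral_indicator (hsm l)]
        congr 1
        funext ω
        by_cases h : L ω = l <;> simp [Set.indicator_apply, hs, h]
      rw [h2, lintegral_mul_eq_lintegral_mul_lintegral_of_indepFun hGm hHm hind]
      have hG : ∫⁻ ω, (if L ω = l then (1:ℝ≥0∞) else 0) ∂μ = ENNReal.ofReal (P l) := by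
        have : (fun ω => (if L ω = l then (1:ℝ≥0∞) else 0)) = (s l).indicator (fun _ => 1) := by
          funext ω; by_cases h : L ω = l <;> simp [Set.indicator_apply, hs, h]
        rw [this, lintegral_indicator (hsm l)]
        simp [hμs l]
      have hH : ∫⁻ ω, ENNReal.ofReal ((Ξ l ω / P l) ^ 2) ∂μ
          = ENNReal.ofReal (V l / P l ^ 2) := by
        have hint : Integrable (fun ω => (Ξ l ω / P l) ^ 2) μ := by
          have := (hL2 l).integrable_sq
          simpa [div_pow] using this.div_const (P l ^ 2)
        rw [← ofReal_integral_eq_lintegral_ofReal hint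
          (Filter.Eventually.of_forall fun ω => sq_nonneg _)]
        congr 1
        simp only [div_pow]
        rw [integral_div]
      rw [hG, hH, ← ENNReal.ofReal_mul (hPpos l).le]
      congr 1
      field_simp
    rw [h0]
    simp_rw [h1]
    rw [← ENNReal.ofReal_tsum_of_nonneg (fun l => div_nonneg (hVnn l) (hPpos l).le) hfin]
  -- integrability of f^2
  have hint2 : Integrable (fun ω => (f ω) ^ 2) μ := by
    refine ⟨(hfm.pow_const 2).aestronglyMeasurable, ?_⟩
    rw [hasFiniteIntegral_iff_norm]
    have : ∀ ω, ENNReal.ofReal ‖(f ω) ^ 2‖ = ENNReal.ofReal ((f ω) ^ 2) := by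
      intro ω; rw [Real.norm_eq_abs, abs_of_nonneg (sq_nonneg _)]
    simp_rw [this, hkey]
    exact ENNReal.ofReal_lt_top
  have hmem2 : MemLp f 2 μ :=
    (memLp_two_iff_integrable_sq hfm.aestronglyMeasurable).2 hint2
  have hint1 : Integrable f μ := hmem2.integrable one_le_two
  constructor
  · -- unbiasedness
    have h0 : ∫ ω, f ω ∂μ = ∑' l, ∫ ω in s l, f ω ∂μ := by
      rw [← integral_iUnion hsm hsd (hsU ▸ hint1.integrableOn), hsU, Measure.restrict_univ]
    have h1 : ∀ l, ∫ ω in s l, f ω ∂μ = E l := by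
      intro l
      have hcongr : ∫ ω in s l, f ω ∂μ = ∫ ω in s l, Ξ l ω / P l ∂μ := by
        refine setIntegral_congr_fun (hsm l) ?_
        intro ω hω
        have : L ω = l := hω
        simp [hf, this]
      rw [hcongr, integral_div, hsetE l]
      exact mul_div_cancel_left₀ _ (hPne l)
    rw [show (∫ ω, Ξ (L ω) ω / P (L ω) ∂μ) = ∫ ω, f ω ∂μ from rfl, h0]
    simp_rw [h1]
    exact htsumE
  · exact hint2
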